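/- Let a′ < a < b < b′ be real numbers and suppose p > 0 on [a′,a] ∪ [b,b′] with p|_{[a′,a]} ∈ W¹₂([a′,a]) and p|_{[b,b′]} ∈ W¹₂([b,b′]). Let φ ∈ C²(ℝ) satisfy 0 ≤ φ ≤ 1, φ ≡ 1 on [a,b], and φ ≡ 0 on (−∞, a′) ∪ (b′, ∞). Then for every u ∈ Dom(L), the product φ·u belongs to Dom(L₀₀). -/

import Mathlib

open MeasureTheory Complex Filter Set

noncomputable section

/-- The complex Hilbert space `L²(ℝ)`. -/
abbrev Hsp : Type := Lp ℂ 2 (volume : Measure ℝ)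

/-- `u` is locally absolutely continuous on `ℝ` with a.e. derivative `g`
(i.e. `u` is the indefinite integral of the locally integrable function `g`). -/
def HasLocDeriv (u g : ℝ → ℂ) : Prop :=
  LocallyIntegrable g volume ∧ ∀ x : ℝ, u x = u 0 + ∫ t in (0:ℝ)..x, g t

lemma HasLocDeriv.intervalIntegrable {u g : ℝ → ℂ} (h : HasLocDeriv u g) (a b : ℝ) :
    IntervalIntegrable g volume a b :=
  (h.1.integrableOn_isCompact isCompact_uIcc).intervalIntegrable

lemma HasLocDeriv.congr_fun {u v g : ℝ → ℂ} (h : HasLocDeriv u g) (huv : ∀ x, v x = u x) :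
    HasLocDeriv v g :=
  ⟨h.1, fun x => by rw [huv x, huv 0]; exact h.2 x⟩

lemma HasLocDeriv.zero : HasLocDeriv (0 : ℝ → ℂ) 0 := by
  refine ⟨locallyIntegrable_const (0 : ℂ), fun x => by simp⟩

lemma HasLocDeriv.add {u g v h' : ℝ → ℂ} (hu : HasLocDeriv u g) (hv : HasLocDeriv v h') :
    HasLocDeriv (fun x => u x + v x) (fun x => g x + h' x) := by
  refine ⟨hu.1.add hv.1, fun x => ?_⟩
  show u x + v x = u 0 + v 0 + ∫ t in (0:ℝ)..x, (g t + h' t)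
  rw [intervalIntegral.integral_add (hu.intervalIntegrable 0 x) (hv.intervalIntegrable 0 x),
    hu.2 x, hv.2 x]
  ring

lemma HasLocDeriv.const_mul {u g : ℝ → ℂ} (c : ℂ) (hu : HasLocDeriv u g) :
    HasLocDeriv (fun x => c * u x) (fun x => c * g x) := by
  have hli : LocallyIntegrable (fun x => c * g x) volume := hu.1.smul c
  refine ⟨hli, fun x => ?_⟩
  have h : ∫ t in (0:ℝ)..x, c * g t = c * ∫ t in (0:ℝ)..x, g t := by
    simpa [smul_eq_mul] using intervalIntegral.integral_smul c g (a := (0:ℝ)) (b := x) (μ := volume)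
  show c * u x = c * u 0 + ∫ t in (0:ℝ)..x, c * g t
  rw [h, hu.2 x]
  ring

/-- The first quasi-derivative `u^{[1]} = p u' - (Q + i r) u`. -/
def qd1 (p Q r : ℝ → ℝ) (u u' : ℝ → ℂ) : ℝ → ℂ :=
  fun x => (p x : ℂ) * u' x - ((Q x : ℂ) + Complex.I * (r x : ℂ)) * u x

/-- `u` belongs (locally) to the domain of the quasi-differential expression:
`u` is locally absolutely continuous with derivative `u'` and the first quasi-derivative
`u^{[1]} = p u' - (Q + i r) u` is locally absolutely continuous with derivative `w`. -/
def QDom (p Q s r : ℝ → ℝ) (u u' w : ℝ → ℂ) : Prop :=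
  HasLocDeriv u u' ∧ HasLocDeriv (qd1 p Q r u u') w

/-- The quasi-differential expression `l[u] = -u^{[2]}` where
`u^{[2]} = (u^{[1]})' + ((Q - i r)/p) u^{[1]} + ((Q² + r²)/p - s) u`. -/
def lExpr (p Q s r : ℝ → ℝ) (u u' w : ℝ → ℂ) : ℝ → ℂ := fun x =>
  -(w x + (((Q x : ℂ) - Complex.I * (r x : ℂ)) / (p x : ℂ)) * qd1 p Q r u u' x
    + ((((Q x) ^ 2 + (r x) ^ 2 : ℝ) : ℂ) / (p x : ℂ) - (s x : ℂ)) * u x)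

/-- The standing minimal regularity assumptions on the real-valued coefficients:
`1/√|p|, Q/√|p|, r/√|p| ∈ L²_loc(ℝ)`, `s ∈ L¹_loc(ℝ)` and `1/p ≠ 0` a.e. -/
structure Coeffs (p Q s r : ℝ → ℝ) : Prop where
  meas_p : Measurable p
  meas_Q : Measurable Q
  meas_s : Measurable s
  meas_r : Measurable r
  hp : LocallyIntegrable (fun x => 1 / |p x|) volume
  hQ : LocallyIntegrable (fun x => (Q x) ^ 2 / |p x|) volume
  hr : LocallyIntegrable (fun x => (r x) ^ 2 / |p x|) volume
  hs : LocallyIntegrable s volume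
  hp0 : ∀ᵐ x ∂(volume : Measure ℝ), p x ≠ 0

lemma qd1_add_eq (p Q r : ℝ → ℝ) (u₁ u₁' u₂ u₂' : ℝ → ℂ) (x : ℝ) :
    qd1 p Q r (fun y => u₁ y + u₂ y) (fun y => u₁' y + u₂' y) x
      = qd1 p Q r u₁ u₁' x + qd1 p Q r u₂ u₂' x := by
  simp only [qd1]; ring

lemma qd1_smul_eq (p Q r : ℝ → ℝ) (c : ℂ) (u u' : ℝ → ℂ) (x : ℝ) :
    qd1 p Q r (fun y => c * u y) (fun y => c * u' y) x = c * qd1 p Q r u u' x := by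
  simp only [qd1]; ring

lemma QDom.zero (p Q s r : ℝ → ℝ) : QDom p Q s r 0 0 0 := by
  refine ⟨HasLocDeriv.zero, HasLocDeriv.zero.congr_fun fun x => ?_⟩
  simp [qd1]

lemma QDom.add {p Q s r : ℝ → ℝ} {u₁ u₁' w₁ u₂ u₂' w₂ : ℝ → ℂ}
    (h₁ : QDom p Q s r u₁ u₁' w₁) (h₂ : QDom p Q s r u₂ u₂' w₂) :
    QDom p Q s r (fun x => u₁ x + u₂ x) (fun x => u₁' x + u₂' x) (fun x => w₁ x + w₂ x) :=
  ⟨h₁.1.add h₂.1, (h₁.2.add h₂.2).congr_fun (qd1_add_eq p Q r u₁ u₁' u₂ u₂')⟩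

lemma QDom.smul {p Q s r : ℝ → ℝ} {u u' w : ℝ → ℂ} (c : ℂ) (h : QDom p Q s r u u' w) :
    QDom p Q s r (fun x => c * u x) (fun x => c * u' x) (fun x => c * w x) :=
  ⟨h.1.const_mul c, (h.2.const_mul c).congr_fun (qd1_smul_eq p Q r c u u')⟩

lemma lExpr_zero (p Q s r : ℝ → ℝ) (x : ℝ) : lExpr p Q s r 0 0 0 x = 0 := by
  simp [lExpr, qd1]

lemma lExpr_add (p Q s r : ℝ → ℝ) (u₁ u₁' w₁ u₂ u₂' w₂ : ℝ → ℂ) (x : ℝ) :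
    lExpr p Q s r (fun y => u₁ y + u₂ y) (fun y => u₁' y + u₂' y) (fun y => w₁ y + w₂ y) x
      = lExpr p Q s r u₁ u₁' w₁ x + lExpr p Q s r u₂ u₂' w₂ x := by
  simp only [lExpr, qd1]; ring

lemma lExpr_smul (p Q s r : ℝ → ℝ) (c : ℂ) (u u' w : ℝ → ℂ) (x : ℝ) :
    lExpr p Q s r (fun y => c * u y) (fun y => c * u' y) (fun y => c * w y) x
      = c * lExpr p Q s r u u' w x := by
  simp only [lExpr, qd1]; ring

/-- The graph of the maximal operator `L` in `L²(ℝ) × L²(ℝ)`. -/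
def maxGraph (p Q s r : ℝ → ℝ) : Submodule ℂ (Hsp × Hsp) where
  carrier := {fg | ∃ u u' w, QDom p Q s r u u' w ∧ (⇑fg.1 =ᵐ[volume] u) ∧
    (⇑fg.2 =ᵐ[volume] lExpr p Q s r u u' w)}
  zero_mem' := by
    refine ⟨0, 0, 0, QDom.zero p Q s r, ?_, ?_⟩
    · filter_upwards [Lp.coeFn_zero ℂ 2 (volume : Measure ℝ)] with x hx using hx
    · filter_upwards [Lp.coeFn_zero ℂ 2 (volume : Measure ℝ)] with x hx
      rw [lExpr_zero]; exact hx
  add_mem' := by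
    rintro ⟨f₁, g₁⟩ ⟨f₂, g₂⟩ ⟨u₁, u₁', w₁, hq₁, hf₁, hg₁⟩ ⟨u₂, u₂', w₂, hq₂, hf₂, hg₂⟩
    refine ⟨fun x => u₁ x + u₂ x, fun x => u₁' x + u₂' x, fun x => w₁ x + w₂ x,
      hq₁.add hq₂, ?_, ?_⟩
    · filter_upwards [Lp.coeFn_add f₁ f₂, hf₁, hf₂] with x h1 h2 h3
      show (⇑(f₁ + f₂)) x = _
      rw [h1]; simp [h2, h3]
    · filter_upwards [Lp.coeFn_add g₁ g₂, hg₁, hg₂] with x h1 h2 h3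
      show (⇑(g₁ + g₂)) x = _
      rw [h1, lExpr_add]; simp [h2, h3]
  smul_mem' := by
    rintro c ⟨f, g⟩ ⟨u, u', w, hq, hf, hg⟩
    refine ⟨fun x => c * u x, fun x => c * u' x, fun x => c * w x, hq.smul c, ?_, ?_⟩
    · filter_upwards [Lp.coeFn_smul c f, hf] with x h1 h2
      show (⇑(c • f)) x = _
      rw [h1]; simp [h2]
    · filter_upwards [Lp.coeFn_smul c g, hg] with x h1 h2
      show (⇑(c • g)) x = _
      rw [h1, lExpr_smul]; simp [h2]

/-- The graph of the preminimal operator `L₀₀` (compactly supported members of the graph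
of the maximal operator). -/
def preminGraph (p Q s r : ℝ → ℝ) : Submodule ℂ (Hsp × Hsp) where
  carrier := {fg | ∃ u u' w, QDom p Q s r u u' w ∧ HasCompactSupport u ∧
    (⇑fg.1 =ᵐ[volume] u) ∧ (⇑fg.2 =ᵐ[volume] lExpr p Q s r u u' w)}
  zero_mem' := by
    refine ⟨0, 0, 0, QDom.zero p Q s r, by simpa using HasCompactSupport.zero, ?_, ?_⟩
    · filter_upwards [Lp.coeFn_zero ℂ 2 (volume : Measure ℝ)] with x hx using hx
    · filter_upwards [Lp.coeFn_zero ℂ 2 (volume : Measure ℝ)] with x hx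
      rw [lExpr_zero]; exact hx
  add_mem' := by
    rintro ⟨f₁, g₁⟩ ⟨f₂, g₂⟩ ⟨u₁, u₁', w₁, hq₁, hc₁, hf₁, hg₁⟩ ⟨u₂, u₂', w₂, hq₂, hc₂, hf₂, hg₂⟩
    refine ⟨fun x => u₁ x + u₂ x, fun x => u₁' x + u₂' x, fun x => w₁ x + w₂ x,
      hq₁.add hq₂, hc₁.add hc₂, ?_, ?_⟩
    · filter_upwards [Lp.coeFn_add f₁ f₂, hf₁, hf₂] with x h1 h2 h3
      show (⇑(f₁ + f₂)) x = _
      rw [h1]; simp [h2, h3]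
    · filter_upwards [Lp.coeFn_add g₁ g₂, hg₁, hg₂] with x h1 h2 h3
      show (⇑(g₁ + g₂)) x = _
      rw [h1, lExpr_add]; simp [h2, h3]
  smul_mem' := by
    rintro c ⟨f, g⟩ ⟨u, u', w, hq, hc, hf, hg⟩
    refine ⟨fun x => c * u x, fun x => c * u' x, fun x => c * w x, hq.smul c,
      hc.mono ?_, ?_, ?_⟩
    · intro x hx
      simp only [Function.mem_support, ne_eq] at hx ⊢
      exact fun h => hx (by rw [h, mul_zero])
    · filter_upwards [Lp.coeFn_smul c f, hf] with x h1 h2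
      show (⇑(c • f)) x = _
      rw [h1]; simp [h2]
    · filter_upwards [Lp.coeFn_smul c g, hg] with x h1 h2
      show (⇑(c • g)) x = _
      rw [h1, lExpr_smul]; simp [h2]

/-- The maximal operator `L`, an unbounded operator in `L²(ℝ)`. -/
def maxOp (p Q s r : ℝ → ℝ) : Hsp →ₗ.[ℂ] Hsp := (maxGraph p Q s r).toLinearPMap

/-- The preminimal operator `L₀₀`, the restriction of `L` to compactly supported functions. -/
def preminOp (p Q s r : ℝ → ℝ) : Hsp →ₗ.[ℂ] Hsp := (preminGraph p Q s r).toLinearPMap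

/-- The minimal operator `L₀`, the closure of `L₀₀`. -/
def minOp (p Q s r : ℝ → ℝ) : Hsp →ₗ.[ℂ] Hsp := (preminOp p Q s r).closure

/-- The boundary bilinear form `[u,v](t) = u(t)·conj(v^{[1]}(t)) − u^{[1]}(t)·conj(v(t))`. -/
def brkt (p Q r : ℝ → ℝ) (u u' v v' : ℝ → ℂ) (t : ℝ) : ℂ :=
  u t * (starRingEnd ℂ) (qd1 p Q r v v' t) - qd1 p Q r u u' t * (starRingEnd ℂ) (v t)

/-- `u, u', w` is a concrete representative of `f` as a member of `Dom(L)`: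
`u` is a representative of the `L²`-class `f`, `u` and `u^{[1]}` are locally absolutely
continuous (with derivatives `u'` and `w` respectively) and `l[u] ∈ L²(ℝ)`. -/
def IsMaxRep (p Q s r : ℝ → ℝ) (f : Hsp) (u u' w : ℝ → ℂ) : Prop :=
  QDom p Q s r u u' w ∧ (⇑f =ᵐ[volume] u) ∧ MemLp (lExpr p Q s r u u' w) 2 volume

/-- Function-level membership in the domain of the preminimal operator `L₀₀`:
`v` and `v^{[1]}` are locally absolutely continuous, `v, l[v] ∈ L²(ℝ)` and `v` has
compact support. -/
def MemPremin (p Q s r : ℝ → ℝ) (v : ℝ → ℂ) : Prop :=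
  ∃ v' w : ℝ → ℂ, QDom p Q s r v v' w ∧ MemLp v 2 volume ∧
    MemLp (lExpr p Q s r v v' w) 2 volume ∧ HasCompactSupport v

/-- `p ∈ W¹_{2,loc}(ℝ)` (for a real-valued function), with weak derivative `p' ∈ L²_loc`. -/
def W12locR (p p' : ℝ → ℝ) : Prop :=
  LocallyIntegrable p' volume ∧ LocallyIntegrable (fun x => (p' x) ^ 2) volume ∧
  ∀ x : ℝ, p x = p 0 + ∫ t in (0:ℝ)..x, p' t

/-- `φ ∈ W²₂(ℝ)` with compact support: `φ, φ', φ'' ∈ L²(ℝ)` where `φ'` and `φ''` are the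
first and second weak derivatives of `φ`, and `supp φ` is compact. -/
def W22cs (φ φ' φ'' : ℝ → ℝ) : Prop :=
  LocallyIntegrable φ' volume ∧ LocallyIntegrable φ'' volume ∧
  MemLp φ 2 volume ∧ MemLp φ' 2 volume ∧ MemLp φ'' 2 volume ∧
  (∀ x : ℝ, φ x = φ 0 + ∫ t in (0:ℝ)..x, φ' t) ∧
  (∀ x : ℝ, φ' x = φ' 0 + ∫ t in (0:ℝ)..x, φ'' t) ∧
  HasCompactSupport φ

/-- `p ∈ W¹₂([α,β]) = H¹([α,β])` with weak derivative `p'` on the interval `[α,β]`. -/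
def W12OnIcc (p p' : ℝ → ℝ) (α β : ℝ) : Prop :=
  IntegrableOn p' (Set.Icc α β) volume ∧ MemLp p' 2 (volume.restrict (Set.Icc α β)) ∧
  ∀ x ∈ Set.Icc α β, p x = p α + ∫ t in α..x, p' t


namespace HasLocDeriv

lemma sub_eq {u g : ℝ → ℂ} (h : HasLocDeriv u g) (x y : ℝ) :
    u y - u x = ∫ t in x..y, g t := by
  rw [h.2 x, h.2 y]
  have := intervalIntegral.integral_interval_sub_left (μ := volume) (f := g)
    (a := 0) (b := y) (c := x) (h.intervalIntegrable 0 y) (h.intervalIntegrable 0 x)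
  rw [← this]; ring

lemma continuous {u g : ℝ → ℂ} (h : HasLocDeriv u g) : Continuous u := by
  have : Continuous fun x => u 0 + ∫ t in (0:ℝ)..x, g t :=
    continuous_const.add (intervalIntegral.continuous_primitive
      (fun a b => h.intervalIntegrable a b) 0)
  exact this.congr (fun x => (h.2 x).symm)

end HasLocDeriv

lemma MeasureTheory.LocallyIntegrable.mul_cont {f g : ℝ → ℂ} (hf : LocallyIntegrable f volume)
    (hg : Continuous g) : LocallyIntegrable (fun x => f x * g x) volume := by
  rw [MeasureTheory.locallyIntegrable_iff] at hf ⊢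
  exact fun K hK => (hf K hK).mul_continuousOn hg.continuousOn hK

lemma MeasureTheory.LocallyIntegrable.cont_mul {f g : ℝ → ℂ} (hf : LocallyIntegrable f volume)
    (hg : Continuous g) : LocallyIntegrable (fun x => g x * f x) volume := by
  simpa [mul_comm] using hf.mul_cont hg

lemma parts_Ioc {f f' g g' : ℝ → ℂ} (hf : HasLocDeriv f f') (hg : HasLocDeriv g g')
    {α β : ℝ} (hαβ : α ≤ β) :
    ∫ t in Set.Ioc α β, (f' t * g t + f t * g' t) = f β * g β - f α * g α := by
  have hfc := hf.continuous
  have hgc := hg.continuous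
  have hf'I : IntegrableOn f' (Set.Icc α β) volume := hf.1.integrableOn_isCompact isCompact_Icc
  have hg'I : IntegrableOn g' (Set.Icc α β) volume := hg.1.integrableOn_isCompact isCompact_Icc
  have hf' : IntegrableOn f' (Set.Ioc α β) volume := hf'I.mono_set Set.Ioc_subset_Icc_self
  have hg' : IntegrableOn g' (Set.Ioc α β) volume := hg'I.mono_set Set.Ioc_subset_Icc_self
  set F : ℝ → ℂ := fun t => ∫ s in α..t, f' s with hFdef
  set G : ℝ → ℂ := fun t => ∫ s in α..t, g' s with hGdef
  have hFc : Continuous F := intervalIntegral.continuous_primitive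
    (fun a b => hf.intervalIntegrable a b) α
  have hGc : Continuous G := intervalIntegral.continuous_primitive
    (fun a b => hg.intervalIntegrable a b) α
  have hfF : ∀ t, f t = f α + F t := fun t => by
    have := hf.sub_eq α t; simp only [hFdef]; rw [← this]; ring
  have hgG : ∀ t, g t = g α + G t := fun t => by
    have := hg.sub_eq α t; simp only [hGdef]; rw [← this]; ring
  -- integrability of products
  have hf'g : IntegrableOn (fun t => f' t * g t) (Set.Ioc α β) volume :=
    (hf'I.mul_continuousOn hgc.continuousOn isCompact_Icc).mono_set Set.Ioc_subset_Icc_self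
  have hfg' : IntegrableOn (fun t => f t * g' t) (Set.Ioc α β) volume :=
    (IntegrableOn.continuousOn_mul hfc.continuousOn hg'I isCompact_Icc).mono_set
      Set.Ioc_subset_Icc_self
  have hf'G : IntegrableOn (fun t => f' t * G t) (Set.Ioc α β) volume :=
    (hf'I.mul_continuousOn hGc.continuousOn isCompact_Icc).mono_set Set.Ioc_subset_Icc_self
  have hFg' : IntegrableOn (fun t => F t * g' t) (Set.Ioc α β) volume :=
    (IntegrableOn.continuousOn_mul hFc.continuousOn hg'I isCompact_Icc).mono_set
      Set.Ioc_subset_Icc_self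
  have hf'c : IntegrableOn (fun t => f' t * g α) (Set.Ioc α β) volume := hf'.mul_const _
  have hcg' : IntegrableOn (fun t => f α * g' t) (Set.Ioc α β) volume := hg'.const_mul _
  have hFβ : ∫ t in Set.Ioc α β, f' t = F β := (intervalIntegral.integral_of_le hαβ).symm
  have hGβ : ∫ t in Set.Ioc α β, g' t = G β := (intervalIntegral.integral_of_le hαβ).symm
  -- the Fubini step
  set k : ℝ × ℝ → ℂ := fun q => if q.2 ≤ q.1 then f' q.2 * g' q.1 else 0 with hkdef
  set μ : Measure ℝ := volume.restrict (Set.Ioc α β) with hμdef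
  have hk : Integrable k (μ.prod μ) := by
    have h1 : Integrable (fun q : ℝ × ℝ => f' q.2 * g' q.1) (μ.prod μ) := by
      have := MeasureTheory.Integrable.mul_prod (μ := μ) (ν := μ) hg' hf'
      exact this.congr (Filter.Eventually.of_forall fun q => by simp [mul_comm])
    have hks : k = Set.indicator {q : ℝ × ℝ | q.2 ≤ q.1} (fun q => f' q.2 * g' q.1) := by
      funext q; simp [hkdef, Set.indicator_apply]
    rw [hks]
    exact h1.indicator (measurableSet_le measurable_snd measurable_fst)
  have swap : ∫ t, (∫ s, k (t, s) ∂μ) ∂μ = ∫ s, (∫ t, k (t, s) ∂μ) ∂μ := by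
    exact MeasureTheory.integral_integral_swap (f := fun t s => k (t, s)) hk
  have inner1 : ∀ t ∈ Set.Ioc α β, (∫ s, k (t, s) ∂μ) = F t * g' t := by
    intro t ht
    have e1 : (fun s => k (t, s)) = fun s => (Set.indicator (Set.Iic t) f' s) * g' t := by
      funext s; simp [hkdef, Set.indicator_apply]
    rw [e1, MeasureTheory.integral_mul_const, MeasureTheory.integral_indicator measurableSet_Iic]
    have e2 : μ.restrict (Set.Iic t) = volume.restrict (Set.Ioc α t) := by
      rw [hμdef, Measure.restrict_restrict measurableSet_Iic]
      congr 1
      ext s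
      simp only [Set.mem_inter_iff, Set.mem_Iic, Set.mem_Ioc]
      constructor
      · rintro ⟨h1, h2, h3⟩; exact ⟨h2, h1⟩
      · rintro ⟨h1, h2⟩; exact ⟨h2, h1, le_trans h2 ht.2⟩
    rw [show ∫ s in Set.Iic t, f' s ∂μ = ∫ s, f' s ∂(μ.restrict (Set.Iic t)) from rfl, e2]
    show (∫ s in Set.Ioc α t, f' s) * g' t = (∫ s in α..t, f' s) * g' t
    rw [intervalIntegral.integral_of_le ht.1.le]
  have inner2 : ∀ s ∈ Set.Ioc α β, (∫ t, k (t, s) ∂μ) = f' s * (G β - G s) := by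
    intro s hs
    have e1 : (fun t => k (t, s)) = fun t => f' s * (Set.indicator (Set.Ici s) g' t) := by
      funext t; simp [hkdef, Set.indicator_apply]
    rw [e1, MeasureTheory.integral_const_mul, MeasureTheory.integral_indicator measurableSet_Ici]
    have e2 : μ.restrict (Set.Ici s) = volume.restrict (Set.Icc s β) := by
      rw [hμdef, Measure.restrict_restrict measurableSet_Ici]
      congr 1
      ext t
      simp only [Set.mem_inter_iff, Set.mem_Ici, Set.mem_Ioc, Set.mem_Icc]
      constructor
      · rintro ⟨h1, h2, h3⟩; exact ⟨h1, h3⟩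
      · rintro ⟨h1, h2⟩; exact ⟨h1, lt_of_lt_of_le hs.1 h1, h2⟩
    rw [show ∫ t in Set.Ici s, g' t ∂μ = ∫ t, g' t ∂(μ.restrict (Set.Ici s)) from rfl, e2]
    rw [show ∫ t, g' t ∂(volume.restrict (Set.Icc s β)) = ∫ t in Set.Icc s β, g' t from rfl]
    rw [MeasureTheory.integral_Icc_eq_integral_Ioc]
    have : ∫ t in Set.Ioc s β, g' t = G β - G s := by
      rw [← intervalIntegral.integral_of_le hs.2, hGdef]
      have := intervalIntegral.integral_interval_sub_left (μ := volume) (f := g')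
        (a := α) (b := β) (c := s) (hg.intervalIntegrable α β) (hg.intervalIntegrable α s)
      simp only [] at this ⊢
      rw [← this]
    rw [this]
  have key : ∫ t in Set.Ioc α β, F t * g' t
      = F β * G β - ∫ t in Set.Ioc α β, f' t * G t := by
    have lhs1 : ∫ t in Set.Ioc α β, F t * g' t = ∫ t, (∫ s, k (t, s) ∂μ) ∂μ := by
      rw [hμdef]
      exact (MeasureTheory.setIntegral_congr_fun measurableSet_Ioc
        (fun t ht => (inner1 t ht).symm))
    have rhs1 : ∫ s, (∫ t, k (t, s) ∂μ) ∂μ = ∫ s in Set.Ioc α β, f' s * (G β - G s) := by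
      rw [hμdef]
      exact MeasureTheory.setIntegral_congr_fun measurableSet_Ioc (fun s hs => inner2 s hs)
    rw [lhs1, swap, rhs1]
    have expand : ∫ s in Set.Ioc α β, f' s * (G β - G s)
        = (∫ s in Set.Ioc α β, f' s * G β) - ∫ s in Set.Ioc α β, f' s * G s := by
      rw [← MeasureTheory.integral_sub (hf'.mul_const _) hf'G]
      exact MeasureTheory.setIntegral_congr_fun measurableSet_Ioc (fun s _ => by ring)
    rw [expand, MeasureTheory.integral_mul_const, hFβ]
  -- now assemble
  calc ∫ t in Set.Ioc α β, (f' t * g t + f t * g' t)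
      = (∫ t in Set.Ioc α β, f' t * g t) + ∫ t in Set.Ioc α β, f t * g' t :=
        MeasureTheory.integral_add hf'g hfg'
    _ = ((∫ t in Set.Ioc α β, f' t * g α) + ∫ t in Set.Ioc α β, f' t * G t)
        + ((∫ t in Set.Ioc α β, f α * g' t) + ∫ t in Set.Ioc α β, F t * g' t) := by
        congr 1
        · rw [← MeasureTheory.integral_add hf'c hf'G]
          exact MeasureTheory.setIntegral_congr_fun measurableSet_Ioc
            (fun t _ => by rw [hgG t]; ring)
        · rw [← MeasureTheory.integral_add hcg' hFg']
          exact MeasureTheory.setIntegral_congr_fun measurableSet_Ioc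
            (fun t _ => by rw [hfF t]; ring)
    _ = f β * g β - f α * g α := by
        rw [key, MeasureTheory.integral_mul_const, MeasureTheory.integral_const_mul, hFβ, hGβ]
        rw [hfF β, hgG β, hfF α, hgG α]
        have hFα : F α = 0 := by simp [hFdef]
        have hGα : G α = 0 := by simp [hGdef]
        rw [hFα, hGα]
        ring

lemma HasLocDeriv.mul {f f' g g' : ℝ → ℂ} (hf : HasLocDeriv f f') (hg : HasLocDeriv g g') :
    HasLocDeriv (fun x => f x * g x) (fun x => f' x * g x + f x * g' x) := by
  refine ⟨(hf.1.mul_cont hg.continuous).add (hg.1.cont_mul hf.continuous), fun x => ?_⟩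
  rcases le_total 0 x with hx | hx
  · rw [intervalIntegral.integral_of_le hx]
    have := parts_Ioc hf hg hx
    rw [this]; ring
  · have := parts_Ioc hf hg hx
    rw [intervalIntegral.integral_symm x 0, intervalIntegral.integral_of_le hx, this]
    ring

lemma hasLocDeriv_primitive {h : ℝ → ℂ} (hli : LocallyIntegrable h volume) (c : ℂ) (base : ℝ) :
    HasLocDeriv (fun x => c + ∫ t in base..x, h t) h := by
  have hint : ∀ a b, IntervalIntegrable h volume a b := fun a b =>
    (hli.integrableOn_isCompact isCompact_uIcc).intervalIntegrable
  refine ⟨hli, fun x => ?_⟩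
  have := intervalIntegral.integral_add_adjacent_intervals (hint base 0) (hint 0 x)
  show c + ∫ t in base..x, h t = (c + ∫ t in base..(0:ℝ), h t) + ∫ t in (0:ℝ)..x, h t
  rw [← this]; ring

lemma hasLocDeriv_ofReal_of_hasDerivAt {F d : ℝ → ℝ} (hd : Continuous d)
    (hF : ∀ x, HasDerivAt F (d x) x) :
    HasLocDeriv (fun x => (F x : ℂ)) (fun x => (d x : ℂ)) := by
  refine ⟨(Complex.continuous_ofReal.comp hd).locallyIntegrable, fun x => ?_⟩
  have h1 : ∫ t in (0:ℝ)..x, d t = F x - F 0 :=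
    intervalIntegral.integral_eq_sub_of_hasDerivAt (fun t _ => hF t) (hd.intervalIntegrable 0 x)
  rw [intervalIntegral.integral_ofReal, h1]
  push_cast; ring

lemma integral_indicator_Iic {h H : ℝ → ℝ} (hh : Continuous h)
    (hH : ∀ t, HasDerivAt H (h t) t) (a : ℝ) (y x : ℝ) :
    ∫ t in y..x, (Set.Iic a).indicator h t = H (min x a) - H (min y a) := by
  have hind : ∀ u v : ℝ, IntervalIntegrable ((Set.Iic a).indicator h) volume u v := by
    intro u v
    exact ((hh.locallyIntegrable.integrableOn_isCompact isCompact_uIcc).indicator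
      measurableSet_Iic).intervalIntegrable
  have base : ∀ z, ∫ t in a..z, (Set.Iic a).indicator h t = H (min z a) - H a := by
    intro z
    rcases le_total z a with hz | hz
    · have hEq : Set.EqOn ((Set.Iic a).indicator h) h (Set.uIcc a z) := by
        intro t ht
        apply Set.indicator_of_mem
        rw [Set.mem_Iic]
        rcases Set.mem_uIcc.mp ht with ⟨_, h2⟩ | ⟨_, h2⟩
        · exact le_trans h2 hz
        · exact h2
      rw [intervalIntegral.integral_congr hEq,
        intervalIntegral.integral_eq_sub_of_hasDerivAt (fun t _ => hH t)
          (hh.intervalIntegrable a z), min_eq_left hz]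
    · rw [intervalIntegral.integral_of_le hz, min_eq_right hz]
      have hz0 : ∀ t ∈ Set.Ioc a z, (Set.Iic a).indicator h t = 0 := by
        intro t ht
        exact Set.indicator_of_notMem (by simp only [Set.mem_Iic, not_le]; exact ht.1) _
      rw [MeasureTheory.setIntegral_congr_fun measurableSet_Ioc hz0]
      simp
  have := intervalIntegral.integral_interval_sub_left (hind a x) (hind a y)
  rw [← this, base x, base y]; ring

lemma integral_indicator_Ioi {h H : ℝ → ℝ} (hh : Continuous h)
    (hH : ∀ t, HasDerivAt H (h t) t) (b : ℝ) (y x : ℝ) :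
    ∫ t in y..x, (Set.Ioi b).indicator h t = H (max x b) - H (max y b) := by
  have hind : ∀ u v : ℝ, IntervalIntegrable ((Set.Ioi b).indicator h) volume u v := by
    intro u v
    exact ((hh.locallyIntegrable.integrableOn_isCompact isCompact_uIcc).indicator
      measurableSet_Ioi).intervalIntegrable
  have base : ∀ z, ∫ t in b..z, (Set.Ioi b).indicator h t = H (max z b) - H b := by
    intro z
    rcases le_total b z with hz | hz
    · rw [intervalIntegral.integral_of_le hz, max_eq_left hz]
      have hz1 : ∀ t ∈ Set.Ioc b z, (Set.Ioi b).indicator h t = h t := fun t ht =>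
        Set.indicator_of_mem ht.1 h
      rw [MeasureTheory.setIntegral_congr_fun measurableSet_Ioc hz1]
      rw [← intervalIntegral.integral_of_le hz,
        intervalIntegral.integral_eq_sub_of_hasDerivAt (fun t _ => hH t)
          (hh.intervalIntegrable b z)]
    · rw [intervalIntegral.integral_symm, intervalIntegral.integral_of_le hz, max_eq_right hz]
      have hz0 : ∀ t ∈ Set.Ioc z b, (Set.Ioi b).indicator h t = 0 := by
        intro t ht
        exact Set.indicator_of_notMem (by simp only [Set.mem_Ioi, not_lt]; exact ht.2) _
      rw [MeasureTheory.setIntegral_congr_fun measurableSet_Ioc hz0]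
      simp
  have := intervalIntegral.integral_interval_sub_left (hind b x) (hind b y)
  rw [← this, base x, base y]; ring

lemma zero_on_closure {f : ℝ → ℝ} (hf : Continuous f) {s : Set ℝ}
    (h : ∀ y ∈ s, f y = 0) : ∀ x ∈ closure s, f x = 0 := by
  intro x hx
  have : Set.EqOn f (fun _ => (0:ℝ)) (closure s) :=
    Set.EqOn.closure (fun y hy => h y hy) hf continuous_const
  exact this hx

lemma deriv_zero_of_const_on_open {f : ℝ → ℝ} {U : Set ℝ} (hU : IsOpen U) {c : ℝ}
    (h : ∀ y ∈ U, f y = c) : ∀ x ∈ U, deriv f x = 0 := by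
  intro x hx
  have hev : f =ᶠ[nhds x] fun _ => c :=
    Filter.eventuallyEq_of_mem (hU.mem_nhds hx) (fun y hy => h y hy)
  rw [hev.deriv_eq]
  exact deriv_const x c

lemma memL2_mul_of_support {f g : ℝ → ℂ} {K : Set ℝ} (hK : IsCompact K)
    (hf : MemLp f 2 volume) (hg : Continuous g)
    (hsupp : ∀ x ∉ K, f x = 0) : MemLp (fun x => f x * g x) 2 volume := by
  obtain ⟨C, hC⟩ := hK.exists_bound_of_continuousOn hg.continuousOn
  have asm : AEStronglyMeasurable (fun x => f x * g x) volume :=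
    hf.aestronglyMeasurable.mul hg.aestronglyMeasurable
  refine MemLp.of_le (hf.const_smul ((max C 0 : ℝ) : ℂ)) asm (Filter.Eventually.of_forall ?_)
  intro x
  by_cases hx : x ∈ K
  · have : ‖f x * g x‖ = ‖f x‖ * ‖g x‖ := norm_mul _ _
    rw [this]
    simp only [Pi.smul_apply, smul_eq_mul, norm_mul]
    calc ‖f x‖ * ‖g x‖ ≤ ‖f x‖ * (max C 0) := by
          apply mul_le_mul_of_nonneg_left _ (norm_nonneg _)
          exact le_trans (hC x hx) (le_max_left _ _)
      _ ≤ ‖((max C 0 : ℝ) : ℂ)‖ * ‖f x‖ := by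
          rw [Complex.norm_real]
          rw [Real.norm_eq_abs, _root_.abs_of_nonneg (le_max_right C 0)]
          linarith
  · simp [hsupp x hx]

lemma MeasureTheory.LocallyIntegrable.ofRealC {f : ℝ → ℝ} (hf : LocallyIntegrable f volume) :
    LocallyIntegrable (fun x => (f x : ℂ)) volume := by
  rw [MeasureTheory.locallyIntegrable_iff] at hf ⊢
  exact fun K hK => (hf K hK).ofReal

lemma MeasureTheory.LocallyIntegrable.indicatorC {f : ℝ → ℝ} {s : Set ℝ}
    (hf : LocallyIntegrable f volume) (hs : MeasurableSet s) :
    LocallyIntegrable (s.indicator f) volume := by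
  rw [MeasureTheory.locallyIntegrable_iff] at hf ⊢
  exact fun K hK => (hf K hK).indicator hs

lemma memL2_ofRealC {f : ℝ → ℝ} (hf : MemLp f 2 volume) : MemLp (fun x => (f x : ℂ)) 2 volume :=
  MemLp.of_le hf (Complex.continuous_ofReal.comp_aestronglyMeasurable hf.aestronglyMeasurable)
    (Filter.Eventually.of_forall fun x => by simp)

lemma memL2_of_bounded_support {f : ℝ → ℂ} {K : Set ℝ} (hK : IsCompact K)
    (asm : AEStronglyMeasurable f volume) (C : ℝ) (hb : ∀ x, ‖f x‖ ≤ C)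
    (hsupp : ∀ x ∉ K, f x = 0) : MemLp f 2 volume :=
  HasCompactSupport.memLp_of_bound (HasCompactSupport.intro hK hsupp) asm C
    (Filter.Eventually.of_forall hb)

/-- Let `a' < a < b < b'`, with `p > 0` on `[a',a] ∪ [b,b']`,
`p|_{[a',a]} ∈ W¹₂([a',a])` and `p|_{[b,b']} ∈ W¹₂([b,b'])`. Let `φ ∈ C²(ℝ)` satisfy
`0 ≤ φ ≤ 1`, `φ ≡ 1` on `[a,b]` and `φ ≡ 0` on `(−∞,a') ∪ (b',∞)`. Then for every
`u ∈ Dom(L)` the product `φ·u` belongs to `Dom(L₀₀)`. -/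
theorem cutoff_interval_mul_mem_premin (p Q s r : ℝ → ℝ) (hc : Coeffs p Q s r)
    (a' a b b' : ℝ) (h₁ : a' < a) (h₂ : a < b) (h₃ : b < b')
    (hppos : ∀ x ∈ Set.Icc a' a ∪ Set.Icc b b', 0 < p x)
    (hpW₁ : ∃ p₁' : ℝ → ℝ, W12OnIcc p p₁' a' a)
    (hpW₂ : ∃ p₂' : ℝ → ℝ, W12OnIcc p p₂' b b')
    (φ : ℝ → ℝ) (hφC2 : ContDiff ℝ 2 φ)
    (hφ01 : ∀ x : ℝ, 0 ≤ φ x ∧ φ x ≤ 1)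
    (hφ1 : ∀ x ∈ Set.Icc a b, φ x = 1)
    (hφ0 : ∀ x : ℝ, (x < a' ∨ b' < x) → φ x = 0)
    (u u' w : ℝ → ℂ) (hq : QDom p Q s r u u' w) (hu2 : MemLp u 2 volume)
    (hl2 : MemLp (lExpr p Q s r u u' w) 2 volume) :
    MemPremin p Q s r (fun x => (φ x : ℂ) * u x) := by
  classical
  obtain ⟨p₁', hW₁⟩ := hpW₁
  obtain ⟨p₂', hW₂⟩ := hpW₂
  have huc : Continuous u := hq.1.continuous
  have hqd1c : Continuous (qd1 p Q r u u') := hq.2.continuous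
  -- derivatives of φ
  set dφ : ℝ → ℝ := deriv φ with hdφdef
  set ddφ : ℝ → ℝ := deriv dφ with hddφdef
  have hφdiff : Differentiable ℝ φ := hφC2.differentiable (by norm_num)
  have hφ' : ∀ x, HasDerivAt φ (dφ x) x := fun x => (hφdiff x).hasDerivAt
  have hφc : Continuous φ := hφC2.continuous
  have hdφC1 : ContDiff ℝ 1 dφ := by
    have h2 : ContDiff ℝ (1 + 1) φ := by norm_num; exact hφC2
    exact (contDiff_succ_iff_deriv.mp h2).2.2
  have hdφdiff : Differentiable ℝ dφ := hdφC1.differentiable one_ne_zero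
  have hdφ' : ∀ x, HasDerivAt dφ (ddφ x) x := fun x => (hdφdiff x).hasDerivAt
  have hdφc : Continuous dφ := hdφC1.continuous
  have hddφc : Continuous ddφ := hdφC1.continuous_deriv le_rfl
  -- vanishing of dφ and ddφ
  have hφ0' : ∀ y ∈ Set.Iio a', φ y = 0 := fun y hy => hφ0 y (Or.inl hy)
  have hφ0'' : ∀ y ∈ Set.Ioi b', φ y = 0 := fun y hy => hφ0 y (Or.inr hy)
  have hφ1' : ∀ y ∈ Set.Ioo a b, φ y = 1 := fun y hy => hφ1 y ⟨hy.1.le, hy.2.le⟩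
  have hdφ_Iio : ∀ x ∈ Set.Iio a', dφ x = 0 :=
    deriv_zero_of_const_on_open isOpen_Iio hφ0'
  have hdφ_Iic : ∀ x ∈ Set.Iic a', dφ x = 0 := by
    have := zero_on_closure hdφc hdφ_Iio; rwa [closure_Iio] at this
  have hdφ_Ioo : ∀ x ∈ Set.Ioo a b, dφ x = 0 :=
    deriv_zero_of_const_on_open isOpen_Ioo hφ1'
  have hdφ_Icc : ∀ x ∈ Set.Icc a b, dφ x = 0 := by
    have := zero_on_closure hdφc hdφ_Ioo; rwa [closure_Ioo h₂.ne] at this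
  have hdφ_Ioi : ∀ x ∈ Set.Ioi b', dφ x = 0 :=
    deriv_zero_of_const_on_open isOpen_Ioi hφ0''
  have hdφ_Ici : ∀ x ∈ Set.Ici b', dφ x = 0 := by
    have := zero_on_closure hdφc hdφ_Ioi; rwa [closure_Ioi] at this
  have hddφ_Iic : ∀ x ∈ Set.Iic a', ddφ x = 0 := by
    have h0 := deriv_zero_of_const_on_open isOpen_Iio (c := 0) hdφ_Iio
    have := zero_on_closure hddφc h0; rwa [closure_Iio] at this
  have hddφ_Icc : ∀ x ∈ Set.Icc a b, ddφ x = 0 := by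
    have h0 := deriv_zero_of_const_on_open isOpen_Ioo (c := 0) hdφ_Ioo
    have := zero_on_closure hddφc h0; rwa [closure_Ioo h₂.ne] at this
  have hddφ_Ici : ∀ x ∈ Set.Ici b', ddφ x = 0 := by
    have h0 := deriv_zero_of_const_on_open isOpen_Ioi (c := 0) hdφ_Ioi
    have := zero_on_closure hddφc h0; rwa [closure_Ioi] at this
  have hdφa : dφ a = 0 := hdφ_Icc a ⟨le_refl a, h₂.le⟩
  have hdφb : dφ b = 0 := hdφ_Icc b ⟨h₂.le, le_refl b⟩
  -- dφ vanishes outside Icc a' b'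
  have hdφ_out : ∀ x, x ∉ Set.Icc a' b' → dφ x = 0 := by
    intro x hx
    rcases not_and_or.mp ((Set.mem_Icc).not.mp hx) with h | h
    · exact hdφ_Iic x (le_of_lt (not_le.mp h))
    · exact hdφ_Ici x (le_of_lt (not_le.mp h))
  -- the modified coefficient p-pieces
  set q₁ : ℝ → ℝ := (Set.Icc a' a).indicator p₁' with hq₁def
  set q₂ : ℝ → ℝ := (Set.Icc b b').indicator p₂' with hq₂def
  have hq₁int : Integrable q₁ volume := hW₁.1.integrable_indicator measurableSet_Icc
  have hq₂int : Integrable q₂ volume := hW₂.1.integrable_indicator measurableSet_Icc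
  set pr₁ : ℝ → ℝ := fun x => p a' + ∫ t in a'..x, q₁ t with hpr₁def
  set pr₂ : ℝ → ℝ := fun x => p b + ∫ t in b..x, q₂ t with hpr₂def
  have hpr₁c : Continuous pr₁ := continuous_const.add (hq₁int.continuous_primitive a')
  have hpr₂c : Continuous pr₂ := continuous_const.add (hq₂int.continuous_primitive b)
  have hpr₁eq : ∀ x ∈ Set.Icc a' a, pr₁ x = p x := by
    intro x hx
    have hEq : Set.EqOn q₁ p₁' (Set.uIcc a' x) := by
      intro t ht
      rw [Set.uIcc_of_le hx.1] at ht
      exact Set.indicator_of_mem (show t ∈ Set.Icc a' a from ⟨ht.1, le_trans ht.2 hx.2⟩) _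
    show p a' + ∫ t in a'..x, q₁ t = p x
    rw [intervalIntegral.integral_congr hEq, ← hW₁.2.2 x hx]
  have hpr₂eq : ∀ x ∈ Set.Icc b b', pr₂ x = p x := by
    intro x hx
    have hEq : Set.EqOn q₂ p₂' (Set.uIcc b x) := by
      intro t ht
      rw [Set.uIcc_of_le hx.1] at ht
      exact Set.indicator_of_mem (show t ∈ Set.Icc b b' from ⟨ht.1, le_trans ht.2 hx.2⟩) _
    show p b + ∫ t in b..x, q₂ t = p x
    rw [intervalIntegral.integral_congr hEq, ← hW₂.2.2 x hx]
  -- complex versions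
  set P₁ : ℝ → ℂ := fun x => (pr₁ x : ℂ) with hP₁def
  set P₂ : ℝ → ℂ := fun x => (pr₂ x : ℂ) with hP₂def
  set Q₁ : ℝ → ℂ := fun x => (q₁ x : ℂ) with hQ₁def
  set Q₂ : ℝ → ℂ := fun x => (q₂ x : ℂ) with hQ₂def
  set T₁ : ℝ → ℂ := fun x => (dφ (min x a) : ℂ) with hT₁def
  set T₂ : ℝ → ℂ := fun x => (dφ (max x b) : ℂ) with hT₂def
  set g₁ : ℝ → ℂ := fun x => (((Set.Iic a).indicator ddφ x : ℝ) : ℂ) with hg₁def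
  set g₂ : ℝ → ℂ := fun x => (((Set.Ioi b).indicator ddφ x : ℝ) : ℂ) with hg₂def
  have hldP₁ : HasLocDeriv P₁ Q₁ := by
    apply (hasLocDeriv_primitive (h := Q₁) (hq₁int.ofReal.locallyIntegrable) ((p a' : ℝ) : ℂ)
      a').congr_fun
    intro x
    show P₁ x = ((p a' : ℝ) : ℂ) + ∫ t in a'..x, Q₁ t
    rw [hP₁def, hQ₁def]
    simp only
    rw [intervalIntegral.integral_ofReal]
    norm_cast
  have hldP₂ : HasLocDeriv P₂ Q₂ := by
    apply (hasLocDeriv_primitive (h := Q₂) (hq₂int.ofReal.locallyIntegrable) ((p b : ℝ) : ℂ)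
      b).congr_fun
    intro x
    show P₂ x = ((p b : ℝ) : ℂ) + ∫ t in b..x, Q₂ t
    rw [hP₂def, hQ₂def]
    simp only
    rw [intervalIntegral.integral_ofReal]
    norm_cast
  have hldT₁ : HasLocDeriv T₁ g₁ := by
    refine ⟨(hddφc.locallyIntegrable.indicatorC measurableSet_Iic).ofRealC, fun x => ?_⟩
    show ((dφ (min x a) : ℝ) : ℂ) = ((dφ (min 0 a) : ℝ) : ℂ)
      + ∫ t in (0:ℝ)..x, (((Set.Iic a).indicator ddφ t : ℝ) : ℂ)
    rw [intervalIntegral.integral_ofReal, integral_indicator_Iic hddφc hdφ' a 0 x]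
    push_cast; ring
  have hldT₂ : HasLocDeriv T₂ g₂ := by
    refine ⟨(hddφc.locallyIntegrable.indicatorC measurableSet_Ioi).ofRealC, fun x => ?_⟩
    show ((dφ (max x b) : ℝ) : ℂ) = ((dφ (max 0 b) : ℝ) : ℂ)
      + ∫ t in (0:ℝ)..x, (((Set.Ioi b).indicator ddφ t : ℝ) : ℂ)
    rw [intervalIntegral.integral_ofReal, integral_indicator_Ioi hddφc hdφ' b 0 x]
    push_cast; ring
  -- key pointwise identity
  have hkey : ∀ x, (p x : ℂ) * (dφ x : ℂ) = P₁ x * T₁ x + P₂ x * T₂ x := by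
    intro x
    have : p x * dφ x = pr₁ x * dφ (min x a) + pr₂ x * dφ (max x b) := by
      rcases le_or_gt x a' with h | h
      · rw [hdφ_Iic x h, min_eq_left (le_trans h h₁.le),
          max_eq_right (le_trans h (by linarith)), hdφ_Iic x h, hdφb]
        ring
      · rcases le_or_gt x a with h2 | h2
        · rw [min_eq_left h2, max_eq_right (le_trans h2 h₂.le), hdφb,
            hpr₁eq x ⟨h.le, h2⟩]
          ring
        · rcases le_or_gt x b with h3 | h3
          · rw [hdφ_Icc x ⟨h2.le, h3⟩, min_eq_right h2.le, max_eq_right h3, hdφa, hdφb]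
            ring
          · rcases le_or_gt x b' with h4 | h4
            · rw [min_eq_right (le_trans h₂.le h3.le), max_eq_left h3.le, hdφa,
                hpr₂eq x ⟨h3.le, h4⟩]
              ring
            · rw [hdφ_Ici x h4.le, min_eq_right (le_trans h₂.le h3.le),
                max_eq_left h3.le, hdφa, hdφ_Ici x h4.le]
              ring
    have hgoal : ((pr₁ x : ℝ) : ℂ) * ((dφ (min x a) : ℝ) : ℂ)
        + ((pr₂ x : ℝ) : ℂ) * ((dφ (max x b) : ℝ) : ℂ) = ((p x : ℝ) : ℂ) * ((dφ x : ℝ) : ℂ) := by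
      exact_mod_cast (congrArg (fun y : ℝ => (y : ℂ)) this).symm
    rw [hP₁def, hP₂def, hT₁def, hT₂def]
    exact hgoal.symm
  -- the quasi-derivative data for v = φ·u
  have hldφC : HasLocDeriv (fun x => (φ x : ℂ)) (fun x => (dφ x : ℂ)) :=
    hasLocDeriv_ofReal_of_hasDerivAt hdφc hφ'
  have hldφu : HasLocDeriv (fun x => (φ x : ℂ) * u x)
      (fun x => (dφ x : ℂ) * u x + (φ x : ℂ) * u' x) := hldφC.mul hq.1
  have hldφq : HasLocDeriv (fun x => (φ x : ℂ) * qd1 p Q r u u' x)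
      (fun x => (dφ x : ℂ) * qd1 p Q r u u' x + (φ x : ℂ) * w x) := hldφC.mul hq.2
  have hldS₁ : HasLocDeriv (fun x => P₁ x * T₁ x)
      (fun x => Q₁ x * T₁ x + P₁ x * g₁ x) := hldP₁.mul hldT₁
  have hldS₂ : HasLocDeriv (fun x => P₂ x * T₂ x)
      (fun x => Q₂ x * T₂ x + P₂ x * g₂ x) := hldP₂.mul hldT₂
  have hldS₁u : HasLocDeriv (fun x => P₁ x * T₁ x * u x)
      (fun x => (Q₁ x * T₁ x + P₁ x * g₁ x) * u x + P₁ x * T₁ x * u' x) := hldS₁.mul hq.1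
  have hldS₂u : HasLocDeriv (fun x => P₂ x * T₂ x * u x)
      (fun x => (Q₂ x * T₂ x + P₂ x * g₂ x) * u x + P₂ x * T₂ x * u' x) := hldS₂.mul hq.1
  refine ⟨fun x => (dφ x : ℂ) * u x + (φ x : ℂ) * u' x,
    fun x => ((dφ x : ℂ) * qd1 p Q r u u' x + (φ x : ℂ) * w x)
      + (((Q₁ x * T₁ x + P₁ x * g₁ x) * u x + P₁ x * T₁ x * u' x)
        + ((Q₂ x * T₂ x + P₂ x * g₂ x) * u x + P₂ x * T₂ x * u' x)), ?_, ?_, ?_, ?_⟩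
  · refine ⟨hldφu, ?_⟩
    apply (hldφq.add (hldS₁u.add hldS₂u)).congr_fun
    intro x
    show qd1 p Q r (fun x => (φ x : ℂ) * u x)
        (fun x => (dφ x : ℂ) * u x + (φ x : ℂ) * u' x) x
      = (φ x : ℂ) * qd1 p Q r u u' x + (P₁ x * T₁ x * u x + P₂ x * T₂ x * u x)
    simp only [qd1]
    linear_combination (u x) * hkey x
  · -- MemLp of φ·u
    refine MemLp.of_le hu2 (((Complex.continuous_ofReal.comp hφc).aestronglyMeasurable).mul
      huc.aestronglyMeasurable) (Filter.Eventually.of_forall fun x => ?_)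
    rw [norm_mul, Complex.norm_real]
    have h01 := hφ01 x
    calc ‖φ x‖ * ‖u x‖ ≤ 1 * ‖u x‖ := by
          apply mul_le_mul_of_nonneg_right _ (norm_nonneg _)
          rw [Real.norm_eq_abs, _root_.abs_of_nonneg h01.1]; exact h01.2
      _ = ‖u x‖ := one_mul _
  · -- MemLp of lExpr applied to φ·u
    obtain ⟨C₁, hC₁⟩ := (isCompact_Icc (a := a') (b := a)).exists_bound_of_continuousOn
      hpr₁c.continuousOn
    obtain ⟨C₂, hC₂⟩ := (isCompact_Icc (a := b) (b := b')).exists_bound_of_continuousOn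
      hpr₂c.continuousOn
    obtain ⟨C₃, hC₃⟩ := (isCompact_Icc (a := a') (b := b')).exists_bound_of_continuousOn
      hddφc.continuousOn
    set K : Set ℝ := Set.Icc a' a ∪ Set.Icc b b' with hKdef
    have hKmeas : MeasurableSet K := measurableSet_Icc.union measurableSet_Icc
    have hKcomp : IsCompact K := isCompact_Icc.union isCompact_Icc
    have hpbound : ∀ x ∈ K, |p x| ≤ max C₁ C₂ := by
      intro x hx
      rcases hx with hx | hx
      · have h := hC₁ x hx
        rw [Real.norm_eq_abs] at h
        rw [← hpr₁eq x hx]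
        exact le_trans h (le_max_left _ _)
      · have h := hC₂ x hx
        rw [Real.norm_eq_abs] at h
        rw [← hpr₂eq x hx]
        exact le_trans h (le_max_right _ _)
    have hdφ_outK : ∀ x, x ∉ K → dφ x = 0 := by
      intro x hx
      simp only [hKdef, Set.mem_union, Set.mem_Icc, not_or, not_and_or, not_le] at hx
      rcases hx.1 with h | h
      · exact hdφ_Iic x h.le
      · rcases hx.2 with h5 | h5
        · exact hdφ_Icc x ⟨h.le, h5.le⟩
        · exact hdφ_Ici x h5.le
    -- Q restricted to K is L²
    have hQK2 : MemLp (K.indicator Q) 2 volume := by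
      rw [memLp_indicator_iff_restrict hKmeas]
      rw [memLp_two_iff_integrable_sq (hc.meas_Q.aestronglyMeasurable.restrict)]
      have hbase : IntegrableOn (fun x => Q x ^ 2 / |p x|) K volume :=
        hc.hQ.integrableOn_isCompact hKcomp
      refine Integrable.mono' (hbase.const_mul (max C₁ C₂))
        ((hc.meas_Q.pow_const 2).aestronglyMeasurable.restrict) ?_
      rw [MeasureTheory.ae_restrict_iff' hKmeas]
      refine Filter.Eventually.of_forall fun x hx => ?_
      have hpx : 0 < p x := hppos x hx
      have hple : |p x| ≤ max C₁ C₂ := hpbound x hx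
      have hpne : |p x| ≠ 0 := ne_of_gt (abs_pos.mpr hpx.ne')
      rw [Real.norm_eq_abs, _root_.abs_of_nonneg (sq_nonneg _)]
      calc Q x ^ 2 = Q x ^ 2 / |p x| * |p x| := (div_mul_cancel₀ _ hpne).symm
        _ ≤ Q x ^ 2 / |p x| * max C₁ C₂ :=
            mul_le_mul_of_nonneg_left hple (div_nonneg (sq_nonneg _) (abs_nonneg _))
        _ = max C₁ C₂ * (Q x ^ 2 / |p x|) := mul_comm _ _
    -- L² facts for the coefficient pieces
    have hQ₁L2 : MemLp Q₁ 2 volume := by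
      rw [hQ₁def]
      exact memL2_ofRealC ((memLp_indicator_iff_restrict measurableSet_Icc).2 hW₁.2.1)
    have hQ₂L2 : MemLp Q₂ 2 volume := by
      rw [hQ₂def]
      exact memL2_ofRealC ((memLp_indicator_iff_restrict measurableSet_Icc).2 hW₂.2.1)
    have hg₁supp : ∀ x, x ∉ Set.Icc a' a → g₁ x = 0 := by
      intro x hx
      rw [hg₁def]; simp only
      rcases not_and_or.mp ((Set.mem_Icc).not.mp hx) with h | h
      · have hx' : x < a' := not_le.mp h
        rw [Set.indicator_of_mem (Set.mem_Iic.mpr (le_trans hx'.le h₁.le)) ddφ,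
          hddφ_Iic x hx'.le]
        simp
      · have hx' : a < x := not_le.mp h
        rw [Set.indicator_of_notMem (by simp only [Set.mem_Iic, not_le]; exact hx')]
        simp
    have hg₂supp : ∀ x, x ∉ Set.Icc b b' → g₂ x = 0 := by
      intro x hx
      rw [hg₂def]; simp only
      rcases not_and_or.mp ((Set.mem_Icc).not.mp hx) with h | h
      · have hx' : x < b := not_le.mp h
        rw [Set.indicator_of_notMem (by simp only [Set.mem_Ioi, not_lt]; exact hx'.le)]
        simp
      · have hx' : b' < x := not_le.mp h
        rw [Set.indicator_of_mem (Set.mem_Ioi.mpr (lt_trans h₃ hx')) ddφ, hddφ_Ici x hx'.le]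
        simp
    have hg₁L2 : MemLp g₁ 2 volume := by
      refine memL2_of_bounded_support (K := Set.Icc a' a) isCompact_Icc ?_ (max C₃ 0)
        (fun x => ?_) hg₁supp
      · rw [hg₁def]
        exact Complex.continuous_ofReal.comp_aestronglyMeasurable
          (hddφc.aestronglyMeasurable.indicator measurableSet_Iic)
      · by_cases hx : x ∈ Set.Icc a' a
        · rw [hg₁def]
          simp only [Complex.norm_real]
          refine le_trans (norm_indicator_le_norm_self ddφ x) ?_
          refine le_trans ?_ (le_max_left C₃ 0)
          exact hC₃ x ⟨hx.1, le_trans hx.2 (by linarith)⟩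
        · rw [hg₁supp x hx]; simp
    have hg₂L2 : MemLp g₂ 2 volume := by
      refine memL2_of_bounded_support (K := Set.Icc b b') isCompact_Icc ?_ (max C₃ 0)
        (fun x => ?_) hg₂supp
      · rw [hg₂def]
        exact Complex.continuous_ofReal.comp_aestronglyMeasurable
          (hddφc.aestronglyMeasurable.indicator measurableSet_Ioi)
      · by_cases hx : x ∈ Set.Icc b b'
        · rw [hg₂def]
          simp only [Complex.norm_real]
          refine le_trans (norm_indicator_le_norm_self ddφ x) ?_
          refine le_trans ?_ (le_max_left C₃ 0)
          exact hC₃ x ⟨le_trans (by linarith) hx.1, hx.2⟩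
        · rw [hg₂supp x hx]; simp
    -- continuity facts
    have hT₁c : Continuous T₁ := by
      rw [hT₁def]
      exact Complex.continuous_ofReal.comp (hdφc.comp (continuous_id.min continuous_const))
    have hT₂c : Continuous T₂ := by
      rw [hT₂def]
      exact Complex.continuous_ofReal.comp (hdφc.comp (continuous_id.max continuous_const))
    have hP₁c : Continuous P₁ := by
      rw [hP₁def]; exact Complex.continuous_ofReal.comp hpr₁c
    have hP₂c : Continuous P₂ := by
      rw [hP₂def]; exact Complex.continuous_ofReal.comp hpr₂c
    -- the pieces
    have hM1 : MemLp (fun x => (φ x : ℂ) * lExpr p Q s r u u' w x) 2 volume := by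
      refine MemLp.of_le hl2 ((Complex.continuous_ofReal.comp hφc).aestronglyMeasurable.mul
        hl2.aestronglyMeasurable) (Filter.Eventually.of_forall fun x => ?_)
      rw [norm_mul, Complex.norm_real]
      have h01 := hφ01 x
      calc ‖φ x‖ * ‖lExpr p Q s r u u' w x‖ ≤ 1 * ‖lExpr p Q s r u u' w x‖ := by
            apply mul_le_mul_of_nonneg_right _ (norm_nonneg _)
            rw [Real.norm_eq_abs, _root_.abs_of_nonneg h01.1]; exact h01.2
        _ = ‖lExpr p Q s r u u' w x‖ := one_mul _
    have hM2 : MemLp (fun x => 2 * (dφ x : ℂ) * qd1 p Q r u u' x) 2 volume := by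
      apply Continuous.memLp_of_hasCompactSupport
      · exact (continuous_const.mul (Complex.continuous_ofReal.comp hdφc)).mul hqd1c
      · apply HasCompactSupport.intro (isCompact_Icc (a := a') (b := b'))
        intro x hx
        rw [hdφ_out x hx]; simp
    have hM3a : MemLp (fun x => Q₁ x * (T₁ x * u x)) 2 volume := by
      refine memL2_mul_of_support (K := Set.Icc a' a) isCompact_Icc hQ₁L2 (hT₁c.mul huc) ?_
      intro x hx
      simp [hQ₁def, hq₁def, Set.indicator_of_notMem hx]
    have hM3c : MemLp (fun x => Q₂ x * (T₂ x * u x)) 2 volume := by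
      refine memL2_mul_of_support (K := Set.Icc b b') isCompact_Icc hQ₂L2 (hT₂c.mul huc) ?_
      intro x hx
      simp [hQ₂def, hq₂def, Set.indicator_of_notMem hx]
    have hM3b : MemLp (fun x => g₁ x * (P₁ x * u x)) 2 volume :=
      memL2_mul_of_support isCompact_Icc hg₁L2 (hP₁c.mul huc) hg₁supp
    have hM3d : MemLp (fun x => g₂ x * (P₂ x * u x)) 2 volume :=
      memL2_mul_of_support isCompact_Icc hg₂L2 (hP₂c.mul huc) hg₂supp
    have hM4' : MemLp (fun x => ((K.indicator Q x : ℝ) : ℂ) * (2 * (dφ x : ℂ) * u x)) 2 volume := by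
      refine memL2_mul_of_support hKcomp (memL2_ofRealC hQK2)
        ((continuous_const.mul (Complex.continuous_ofReal.comp hdφc)).mul huc) ?_
      intro x hx
      rw [Set.indicator_of_notMem hx]; simp
    have hM4 : MemLp (fun x => 2 * (Q x : ℂ) * (dφ x : ℂ) * u x) 2 volume := by
      apply hM4'.ae_eq
      refine Filter.Eventually.of_forall fun x => ?_
      by_cases hx : x ∈ K
      · show ((K.indicator Q x : ℝ) : ℂ) * (2 * (dφ x : ℂ) * u x)
          = 2 * (Q x : ℂ) * (dφ x : ℂ) * u x
        rw [Set.indicator_of_mem hx]; ring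
      · show ((K.indicator Q x : ℝ) : ℂ) * (2 * (dφ x : ℂ) * u x)
          = 2 * (Q x : ℂ) * (dφ x : ℂ) * u x
        rw [Set.indicator_of_notMem hx, hdφ_outK x hx]; simp
    have hMc : MemLp (fun x => (φ x : ℂ) * lExpr p Q s r u u' w x
        - (2 * (dφ x : ℂ) * qd1 p Q r u u' x
          + ((Q₁ x * (T₁ x * u x) + g₁ x * (P₁ x * u x))
            + (Q₂ x * (T₂ x * u x) + g₂ x * (P₂ x * u x)))
          + 2 * (Q x : ℂ) * (dφ x : ℂ) * u x)) 2 volume :=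
      hM1.sub ((hM2.add ((hM3a.add hM3b).add (hM3c.add hM3d))).add hM4)
    apply hMc.ae_eq
    filter_upwards [hc.hp0] with x hpx
    have hpxC : (p x : ℂ) ≠ 0 := Complex.ofReal_ne_zero.mpr hpx
    have hk := hkey x
    simp only [lExpr, qd1]
    field_simp
    linear_combination (-(u' x) * (p x : ℂ)) * hk
  · -- compact support
    apply HasCompactSupport.intro (isCompact_Icc (a := a') (b := b'))
    intro x hx
    simp only [Set.mem_Icc, not_and_or, not_le] at hx
    rcases hx with h | h
    · rw [hφ0 x (Or.inl h)]; simp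
    · rw [hφ0 x (Or.inr h)]; simp

end
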